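/- Let L be a Lie algebra over a field, S a linear subspace of L, and define subspaces S_k inductively by S₁ = S and S_{k+1} = span{[X, Y] : X ∈ S, Y ∈ S_k}. Let 𝔤 be the Lie subalgebra of L generated by S. Then 𝔤 = ∑_{k≥1} S_k (as subspaces), and the derived algebra 𝔤' = [𝔤, 𝔤] equals ∑_{k≥2} S_k. -/
import Mathlib


/-- Given a linear subspace `S` of a Lie algebra, `lowerSeq S k` is the subspace `S_{k+1}` of the
inductively defined sequence `S₁ = S`, `S_{k+1} = span {[X, Y] : X ∈ S, Y ∈ S_k}`. -/
def lowerSeq {K L : Type*} [Field K] [LieRing L] [LieAlgebra K L]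
    (S : Submodule K L) : ℕ → Submodule K L
  | 0 => S
  | k + 1 => Submodule.span K {z | ∃ x ∈ S, ∃ y ∈ lowerSeq S k, z = ⁅x, y⁆}

section aux
variable {K L : Type*} [Field K] [LieRing L] [LieAlgebra K L] (S : Submodule K L)

lemma lowerSeq_base {k : ℕ} {a y : L} (ha : a ∈ S) (hy : y ∈ lowerSeq S k) :
    ⁅a, y⁆ ∈ lowerSeq S (k + 1) :=
  Submodule.subset_span ⟨a, ha, y, hy, rfl⟩

lemma lowerSeq_bracket : ∀ j k : ℕ, ∀ x y : L, x ∈ lowerSeq S j → y ∈ lowerSeq S k →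
    ⁅x, y⁆ ∈ lowerSeq S (j + k + 1) := by
  intro j
  induction j with
  | zero =>
    intro k x y hx hy
    have h : (0 : ℕ) + k + 1 = k + 1 := by omega
    rw [h]
    exact lowerSeq_base S hx hy
  | succ j ih =>
    intro k x y hx hy
    have hx' : x ∈ Submodule.span K {z | ∃ a ∈ S, ∃ b ∈ lowerSeq S j, z = ⁅a, b⁆} := hx
    clear hx
    induction hx' using Submodule.span_induction with
    | mem z hz =>
      obtain ⟨a, ha, b, hb, rfl⟩ := hz
      have h1 : ⁅a, ⁅b, y⁆⁆ ∈ lowerSeq S (j + k + 1 + 1) :=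
        lowerSeq_base S ha (ih k b y hb hy)
      have h2 : ⁅b, ⁅a, y⁆⁆ ∈ lowerSeq S (j + (k + 1) + 1) :=
        ih (k + 1) b _ hb (lowerSeq_base S ha hy)
      have he : j + (k + 1) + 1 = j + k + 1 + 1 := by omega
      rw [he] at h2
      have hj : j + 1 + k + 1 = j + k + 1 + 1 := by omega
      rw [hj, lie_lie]
      exact Submodule.sub_mem _ h1 h2
    | zero => simp
    | add u v _ _ hu hv => rw [add_lie]; exact Submodule.add_mem _ hu hv
    | smul c u _ hu => rw [smul_lie]; exact Submodule.smul_mem _ c hu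

lemma lowerSeq_le_lieSpan : ∀ k : ℕ,
    lowerSeq S k ≤ (LieSubalgebra.lieSpan K L S).toSubmodule := by
  intro k
  induction k with
  | zero => exact fun x hx => LieSubalgebra.subset_lieSpan hx
  | succ k ih =>
    rw [show lowerSeq S (k+1) =
      Submodule.span K {z | ∃ x ∈ S, ∃ y ∈ lowerSeq S k, z = ⁅x, y⁆} from rfl]
    apply Submodule.span_le.2
    rintro z ⟨x, hx, y, hy, rfl⟩
    exact LieSubalgebra.lie_mem _ (LieSubalgebra.subset_lieSpan hx) (ih hy)

end aux

/-- Let `S` be a linear subspace of a Lie algebra `L` over a field, with `S_k` defined by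
`S₁ = S`, `S_{k+1} = span {[X, Y] : X ∈ S, Y ∈ S_k}`, and let `𝔤` be the Lie subalgebra
generated by `S`. Then `𝔤 = ∑_{k ≥ 1} S_k` as subspaces, and the derived algebra
`𝔤' = [𝔤, 𝔤]` (the span of all brackets of elements of `𝔤`) equals `∑_{k ≥ 2} S_k`.
(Here `lowerSeq S k = S_{k+1}`.) -/
theorem stmt_6 {K L : Type*} [Field K] [LieRing L] [LieAlgebra K L]
    (S : Submodule K L)
    (𝔤 : LieSubalgebra K L) (h𝔤 : 𝔤 = LieSubalgebra.lieSpan K L S) :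
    (⨆ k : ℕ, lowerSeq S k) = 𝔤.toSubmodule ∧
    (⨆ k : ℕ, lowerSeq S (k + 1)) =
      Submodule.span K {z | ∃ x ∈ 𝔤, ∃ y ∈ 𝔤, z = ⁅x, y⁆} := by
  subst h𝔤
  set T : Submodule K L := ⨆ k : ℕ, lowerSeq S k with hT
  -- closure under bracket: a bracket of two elements of `T` lands in `⨆ k, S_{k+2}`
  have hbr : ∀ x ∈ T, ∀ y ∈ T, ⁅x, y⁆ ∈ (⨆ k : ℕ, lowerSeq S (k + 1)) := by
    intro x hx
    induction hx using Submodule.iSup_induction' with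
    | mem j x hx =>
      intro y hy
      induction hy using Submodule.iSup_induction' with
      | mem k y hy =>
        exact Submodule.mem_iSup_of_mem (j + k) (lowerSeq_bracket S j k x y hx hy)
      | zero => simp
      | add u v _ _ hu hv => rw [lie_add]; exact Submodule.add_mem _ hu hv
    | zero => intro y hy; simp
    | add u v _ _ hu hv =>
      intro y hy; rw [add_lie]; exact Submodule.add_mem _ (hu y hy) (hv y hy)
  have hsub : (⨆ k : ℕ, lowerSeq S (k + 1)) ≤ T := by
    apply iSup_le; intro k
    exact le_iSup (lowerSeq S) (k + 1)
  have hT_lie : ∀ x ∈ T, ∀ y ∈ T, ⁅x, y⁆ ∈ T := fun x hx y hy => hsub (hbr x hx y hy)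
  -- part 1
  have h1 : T = (LieSubalgebra.lieSpan K L S).toSubmodule := by
    apply le_antisymm
    · exact iSup_le (lowerSeq_le_lieSpan S)
    · let 𝔥 : LieSubalgebra K L := { T with lie_mem' := fun {x y} hx hy => hT_lie x hx y hy }
      have : LieSubalgebra.lieSpan K L S ≤ 𝔥 :=
        LieSubalgebra.lieSpan_le.2 (le_iSup (lowerSeq S) 0)
      exact this
  refine ⟨h1, ?_⟩
  apply le_antisymm
  · apply iSup_le
    intro k
    rw [show lowerSeq S (k+1) =
      Submodule.span K {z | ∃ x ∈ S, ∃ y ∈ lowerSeq S k, z = ⁅x, y⁆} from rfl]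
    apply Submodule.span_le.2
    rintro z ⟨x, hx, y, hy, rfl⟩
    apply Submodule.subset_span
    exact ⟨x, LieSubalgebra.subset_lieSpan hx, y, lowerSeq_le_lieSpan S k hy, rfl⟩
  · apply Submodule.span_le.2
    rintro z ⟨x, hx, y, hy, rfl⟩
    have hx' : x ∈ T := by rw [h1]; exact hx
    have hy' : y ∈ T := by rw [h1]; exact hy
    exact hbr x hx' y hy'
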